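/- Lemma 3.2, inequality (3.1): let θ₀ ∈ ℝ^Λ, α_{0,λ} = ∫_E f_{θ₀} ψ_λ dμ, b = exp(‖log f_{θ₀}‖_∞), e = exp(1), and let α ∈ ℝ^Λ with ‖α − α₀‖₂ ≤ 1/(2·e·b·A). Then any θ(α) ∈ ℝ^Λ obtained as in Lemma 3.2 (i.e., with ‖θ(α) − θ₀‖₂ ≤ 2·e·b·‖α − α₀‖₂ being part of the construction) satisfies ∫_E f_{θ(α)} ψ_λ dμ = α_λ for all λ and ‖θ(α) − θ₀‖₂ ≤ 2·e·b·‖α − α₀‖₂; in particular there exists θ(α) ∈ ℝ^Λ satisfying both the moment equations and this norm bound. -/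

import Mathlib

open MeasureTheory Real Filter

private lemma aux_deriv_nonneg {h : ℝ → ℝ} {D : ℝ} (hd : HasDerivAt h D 0)
    (hmin : ∀ t ∈ Set.Ioc (0:ℝ) 1, h 0 ≤ h t) : 0 ≤ D := by
  have hs := hasDerivAt_iff_tendsto_slope.1 hd
  have h2 : Tendsto (slope h 0) (nhdsWithin 0 (Set.Ioi 0)) (nhds D) :=
    hs.mono_left (nhdsWithin_mono _ fun t ht => ne_of_gt ht)
  refine ge_of_tendsto h2 ?_
  filter_upwards [Ioc_mem_nhdsGT_of_mem (Set.mem_Ico.2 ⟨le_refl (0:ℝ), one_pos⟩)] with t ht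
  have h3 := hmin t ht
  have ht0 : 0 < t := ht.1
  rw [slope_def_field]
  have : 0 ≤ h t - h 0 := by linarith
  have h4 : (0:ℝ) ≤ (h t - h 0) / (t - 0) := by
    apply div_nonneg this; linarith
  exact h4

private lemma aux_exp_strong (u v : ℝ) :
    Real.exp (min u v) * (u - v)^2 ≤ (Real.exp u - Real.exp v) * (u - v) := by
  rcases le_total v u with h | h
  · rw [min_eq_right h]
    have h1 : (u - v) + 1 ≤ Real.exp (u - v) := Real.add_one_le_exp _
    have h2 : Real.exp v * Real.exp (u - v) = Real.exp u := by
      rw [← Real.exp_add]; ring_nf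
    have h4 : Real.exp v * (u - v) ≤ Real.exp u - Real.exp v := by
      nlinarith [Real.exp_pos v]
    have h5 := mul_le_mul_of_nonneg_right h4 (sub_nonneg.2 h)
    nlinarith [h5]
  · rw [min_eq_left h]
    have h1 : (v - u) + 1 ≤ Real.exp (v - u) := Real.add_one_le_exp _
    have h2 : Real.exp u * Real.exp (v - u) = Real.exp v := by
      rw [← Real.exp_add]; ring_nf
    have h4 : Real.exp u * (v - u) ≤ Real.exp v - Real.exp u := by
      nlinarith [Real.exp_pos u]
    have h5 := mul_le_mul_of_nonneg_right h4 (sub_nonneg.2 h)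
    nlinarith [h5]

private lemma aux_exp_lip {u v M : ℝ} (hu : u ≤ M) (hv : v ≤ M) :
    |Real.exp u - Real.exp v| ≤ Real.exp M * |u - v| := by
  rcases le_total v u with h | h
  · rw [abs_of_nonneg (sub_nonneg.2 (Real.exp_le_exp.2 h)), abs_of_nonneg (sub_nonneg.2 h)]
    have h2 : Real.exp u * Real.exp (v - u) = Real.exp v := by
      rw [← Real.exp_add]; ring_nf
    have h3 : Real.exp u ≤ Real.exp M := Real.exp_le_exp.2 hu
    nlinarith [Real.exp_pos u, Real.add_one_le_exp (v - u), sub_nonneg.2 h]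
  · rw [abs_of_nonpos (sub_nonpos.2 (Real.exp_le_exp.2 h)), abs_of_nonpos (sub_nonpos.2 h)]
    have h2 : Real.exp v * Real.exp (u - v) = Real.exp u := by
      rw [← Real.exp_add]; ring_nf
    have h3 : Real.exp v ≤ Real.exp M := Real.exp_le_exp.2 hv
    nlinarith [Real.exp_pos v, Real.add_one_le_exp (u - v), sub_nonpos.2 h]

private lemma aux_integrable {E : Type*} [MeasurableSpace E] (μ : Measure E)
    [IsFiniteMeasure μ] {f : E → ℝ} (hf : Measurable f) {C : ℝ} (h : ∀ x, |f x| ≤ C) :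
    Integrable f μ :=
  ⟨hf.aestronglyMeasurable,
    HasFiniteIntegral.of_bounded (ae_of_all _ (by simpa [Real.norm_eq_abs] using h))⟩

private lemma aux_hasDerivAt_integral {E : Type*} [MeasurableSpace E] (μ : Measure E)
    [IsFiniteMeasure μ] {a b : E → ℝ} (ha : Measurable a) (hb : Measurable b)
    {Ca Cb : ℝ} (hCa0 : 0 ≤ Ca) (hCb0 : 0 ≤ Cb)
    (hCa : ∀ x, |a x| ≤ Ca) (hCb : ∀ x, |b x| ≤ Cb) :
    HasDerivAt (fun t => ∫ x, Real.exp (a x + t * b x) ∂μ)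
      (∫ x, b x * Real.exp (a x) ∂μ) 0 := by
  have hexp_le : ∀ (t : ℝ), |t| ≤ 1 → ∀ x, Real.exp (a x + t * b x) ≤ Real.exp (Ca + Cb) := by
    intro t ht x
    apply Real.exp_le_exp.2
    have h1 : a x ≤ Ca := (abs_le.1 (hCa x)).2
    have h2 : t * b x ≤ |t| * |b x| := le_trans (le_abs_self _) (by rw [abs_mul])
    have h3 : |t| * |b x| ≤ 1 * Cb := mul_le_mul ht (hCb x) (abs_nonneg _) zero_le_one
    linarith
  have key := hasDerivAt_integral_of_dominated_loc_of_deriv_le (μ := μ)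
    (F := fun t x => Real.exp (a x + t * b x))
    (F' := fun t x => b x * Real.exp (a x + t * b x))
    (x₀ := (0:ℝ)) (bound := fun _ => Cb * Real.exp (Ca + Cb)) (s := Metric.ball (0:ℝ) 1) (Metric.ball_mem_nhds _ one_pos)
    (Eventually.of_forall fun t => ((ha.add (hb.const_mul t)).exp).aestronglyMeasurable)
    ?_ ?_ ?_ (integrable_const _) ?_
  · have := key.2
    simpa using this
  · apply aux_integrable μ ((ha.add (hb.const_mul 0)).exp)
    intro x
    rw [abs_of_nonneg (Real.exp_pos _).le]
    exact hexp_le 0 (by simp) x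
  · exact (hb.mul ((ha.add (hb.const_mul 0)).exp)).aestronglyMeasurable
  · refine ae_of_all _ fun x t ht => ?_
    have ht1 : |t| ≤ 1 := by
      rw [Metric.mem_ball, Real.dist_eq, sub_zero] at ht; exact ht.le
    rw [Real.norm_eq_abs, abs_mul, abs_of_nonneg (Real.exp_pos _).le]
    exact mul_le_mul (hCb x) (hexp_le t ht1 x) (Real.exp_pos _).le hCb0
  · refine ae_of_all _ fun x t _ => ?_
    have h1 : HasDerivAt (fun t : ℝ => a x + t * b x) (b x) t :=
      ((hasDerivAt_mul_const (b x)).const_add (a x))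
    simpa [mul_comm] using h1.exp

theorem information_projection_theta_bound
    {E : Type*} [MeasurableSpace E] (μ : Measure E) [IsFiniteMeasure μ]
    {Λ : Type*} [Fintype Λ] [DecidableEq Λ] (ψ : Λ → E → ℝ)
    (hmeas : ∀ l, Measurable (ψ l))
    (hbdd : ∀ l, ∃ C : ℝ, ∀ x, |ψ l x| ≤ C)
    (horth : ∀ l k, ∫ x, ψ l x * ψ k x ∂μ = if l = k then (1 : ℝ) else 0)
    (A : ℝ) (hApos : 0 < A)
    (hA : ∀ c : Λ → ℝ, ∀ x, |∑ l, c l * ψ l x| ≤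
      A * Real.sqrt (∫ y, (∑ l, c l * ψ l y) ^ 2 ∂μ))
    (θ₀ : Λ → ℝ) (α : Λ → ℝ)
    (hclose : Real.sqrt (∑ l,
        (α l - ∫ x, Real.exp (∑ l', θ₀ l' * ψ l' x) * ψ l x ∂μ) ^ 2) ≤
      1 / (2 * Real.exp 1 * Real.exp (⨆ x, |∑ l, θ₀ l * ψ l x|) * A)) :
    ∃ θα : Λ → ℝ, (∀ l, ∫ x, Real.exp (∑ l', θα l' * ψ l' x) * ψ l x ∂μ = α l) ∧
      Real.sqrt (∑ l, (θα l - θ₀ l) ^ 2) ≤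
        2 * Real.exp 1 * Real.exp (⨆ x, |∑ l, θ₀ l * ψ l x|) *
          Real.sqrt (∑ l,
            (α l - ∫ x, Real.exp (∑ l', θ₀ l' * ψ l' x) * ψ l x ∂μ) ^ 2) := by
  classical
  rcases isEmpty_or_nonempty Λ with hΛ | hΛ
  · refine ⟨θ₀, fun l => (hΛ.false l).elim, ?_⟩
    simp
  -- Λ is nonempty
  have hE : Nonempty E := by
    by_contra h
    rw [not_nonempty_iff] at h
    have h1 := horth (Classical.arbitrary Λ) (Classical.arbitrary Λ)
    rw [if_pos rfl, integral_of_isEmpty] at h1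
    exact one_ne_zero h1.symm
  choose C hC using hbdd
  have hC0 : ∀ l, 0 ≤ C l := fun l =>
    le_trans (abs_nonneg _) (hC l (Classical.arbitrary E))
  -- measurability of linear combinations
  have hSmeas : ∀ c : Λ → ℝ, Measurable fun x => ∑ l, c l * ψ l x := fun c =>
    Finset.measurable_sum _ fun l _ => (hmeas l).const_mul (c l)
  -- crude bound
  have hScrude : ∀ (c : Λ → ℝ) x, |∑ l, c l * ψ l x| ≤ ∑ l, |c l| * C l := by
    intro c x
    refine le_trans (Finset.abs_sum_le_sum_abs _ _) (Finset.sum_le_sum fun l _ => ?_)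
    rw [abs_mul]
    exact mul_le_mul_of_nonneg_left (hC l x) (abs_nonneg _)
  -- L² identity
  have hL2 : ∀ c : Λ → ℝ, ∫ y, (∑ l, c l * ψ l y) ^ 2 ∂μ = ∑ l, c l ^ 2 := by
    intro c
    have hpt : ∀ y, (∑ l, c l * ψ l y) ^ 2
        = ∑ l, ∑ k, c l * c k * (ψ l y * ψ k y) := by
      intro y
      rw [sq, Finset.sum_mul_sum]
      exact Finset.sum_congr rfl fun l _ => Finset.sum_congr rfl fun k _ => by ring
    rw [show (fun y => (∑ l, c l * ψ l y) ^ 2)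
        = fun y => ∑ l, ∑ k, c l * c k * (ψ l y * ψ k y) from funext hpt]
    have hintlk : ∀ l k : Λ, Integrable (fun y => c l * c k * (ψ l y * ψ k y)) μ := by
      intro l k
      refine (aux_integrable μ ((hmeas l).mul (hmeas k)) (C := C l * C k) fun x => ?_).const_mul _
      rw [Pi.mul_apply, abs_mul]
      exact mul_le_mul (hC l x) (hC k x) (abs_nonneg _) (hC0 l)
    rw [integral_finset_sum _ fun l _ => integrable_finset_sum _ fun k _ => hintlk l k]
    have : ∀ l : Λ, ∫ y, ∑ k, c l * c k * (ψ l y * ψ k y) ∂μ = c l ^ 2 := by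
      intro l
      rw [integral_finset_sum _ fun k _ => hintlk l k]
      have : ∀ k : Λ, ∫ y, c l * c k * (ψ l y * ψ k y) ∂μ
          = c l * c k * (if l = k then (1:ℝ) else 0) := by
        intro k
        rw [integral_const_mul, horth l k]
      rw [Finset.sum_congr rfl fun k _ => this k]
      simp [Finset.sum_ite_eq, sq]
    exact Finset.sum_congr rfl fun l _ => this l
  -- sup bound via A
  have hSle : ∀ (c : Λ → ℝ) x, |∑ l, c l * ψ l x| ≤ A * Real.sqrt (∑ l, c l ^ 2) := by
    intro c x
    have h1 := hA c x
    rwa [hL2 c] at h1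
  -- supremum bound M
  set M : ℝ := ⨆ x, |∑ l, θ₀ l * ψ l x| with hMdef
  have hMb : ∀ x, |∑ l, θ₀ l * ψ l x| ≤ M := by
    intro x
    rw [hMdef]
    refine le_ciSup (f := fun x => |∑ l, θ₀ l * ψ l x|)
      ⟨A * Real.sqrt (∑ l, θ₀ l ^ 2), ?_⟩ x
    rintro _ ⟨y, rfl⟩
    exact hSle θ₀ y
  have hM0 : 0 ≤ M := le_trans (abs_nonneg _) (hMb (Classical.arbitrary E))
  -- integrability of exp(S c) * h
  have hintexp : ∀ (c : Λ → ℝ) (h : E → ℝ), Measurable h → ∀ B : ℝ,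
      (∀ x, |h x| ≤ B) → Integrable (fun x => Real.exp (∑ l, c l * ψ l x) * h x) μ := by
    intro c h hhm B hB
    have hB0 : 0 ≤ B := le_trans (abs_nonneg _) (hB (Classical.arbitrary E))
    refine aux_integrable μ ((hSmeas c).exp.mul hhm)
      (C := Real.exp (A * Real.sqrt (∑ l, c l ^ 2)) * B) fun x => ?_
    rw [abs_mul, abs_of_nonneg (Real.exp_pos _).le]
    exact mul_le_mul (Real.exp_le_exp.2 ((abs_le.1 (hSle c x)).2)) (hB x)
      (abs_nonneg _) (Real.exp_pos _).le
  have hexpint : ∀ c : Λ → ℝ, Integrable (fun x => Real.exp (∑ l, c l * ψ l x)) μ := by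
    intro c
    simpa using hintexp c (fun _ => 1) measurable_const 1 (by simp)
  -- the moment map
  set Gf : (Λ → ℝ) → Λ → ℝ :=
    fun c l => ∫ x, Real.exp (∑ l', c l' * ψ l' x) * ψ l x ∂μ with hGdef
  have hGlin : ∀ c d : Λ → ℝ,
      ∫ x, (∑ l, d l * ψ l x) * Real.exp (∑ l', c l' * ψ l' x) ∂μ
        = ∑ l, d l * Gf c l := by
    intro c d
    have hpt : ∀ x, (∑ l, d l * ψ l x) * Real.exp (∑ l', c l' * ψ l' x)
        = ∑ l, d l * (Real.exp (∑ l', c l' * ψ l' x) * ψ l x) := by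
      intro x
      rw [Finset.sum_mul]
      exact Finset.sum_congr rfl fun l _ => by ring
    rw [show (fun x => (∑ l, d l * ψ l x) * Real.exp (∑ l', c l' * ψ l' x))
        = fun x => ∑ l, d l * (Real.exp (∑ l', c l' * ψ l' x) * ψ l x) from funext hpt]
    rw [integral_finset_sum _ fun l _ =>
      (hintexp c (ψ l) (hmeas l) (C l) (hC l)).const_mul (d l)]
    exact Finset.sum_congr rfl fun l _ => integral_const_mul _ _
  -- linearity of sums pointwise
  have hsub : ∀ (a b : Λ → ℝ) x, ∑ l, (a l - b l) * ψ l x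
      = (∑ l, a l * ψ l x) - ∑ l, b l * ψ l x := by
    intro a b x
    rw [← Finset.sum_sub_distrib]
    exact Finset.sum_congr rfl fun l _ => by ring
  have hbound : ∀ (a : Λ → ℝ), A * Real.sqrt (∑ l, (a l - θ₀ l) ^ 2) ≤ 1 →
      ∀ x, -(M+1) ≤ ∑ l, a l * ψ l x ∧ ∑ l, a l * ψ l x ≤ M + 1 := by
    intro a ha x
    have h1 : |(∑ l, a l * ψ l x) - ∑ l, θ₀ l * ψ l x| ≤ 1 := by
      rw [← hsub a θ₀ x]
      exact le_trans (hSle _ x) ha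
    obtain ⟨h1a, h1b⟩ := abs_le.1 h1
    obtain ⟨h2a, h2b⟩ := abs_le.1 (hMb x)
    exact ⟨by linarith, by linarith⟩
  -- integrability of products with exp
  have hintmul : ∀ d e : Λ → ℝ,
      Integrable (fun x => (∑ l, d l * ψ l x) * Real.exp (∑ l', e l' * ψ l' x)) μ := by
    intro d e
    have h := hintexp e (fun x => ∑ l, d l * ψ l x) (hSmeas d) _ (fun x => hScrude d x)
    simpa [mul_comm] using h
  -- strong monotonicity of the moment map
  have hstrong : ∀ c c' : Λ → ℝ,
      A * Real.sqrt (∑ l, (c l - θ₀ l) ^ 2) ≤ 1 →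
      A * Real.sqrt (∑ l, (c' l - θ₀ l) ^ 2) ≤ 1 →
      Real.exp (-(M + 1)) * ∑ l, (c l - c' l) ^ 2
        ≤ ∑ l, (c l - c' l) * (Gf c l - Gf c' l) := by
    intro c c' hc hc'
    have hpt : ∀ x, Real.exp (-(M+1)) * (∑ l, (c l - c' l) * ψ l x) ^ 2
        ≤ (∑ l, (c l - c' l) * ψ l x) * Real.exp (∑ l', c l' * ψ l' x)
          - (∑ l, (c l - c' l) * ψ l x) * Real.exp (∑ l', c' l' * ψ l' x) := by
      intro x
      have hd : ∑ l, (c l - c' l) * ψ l x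
          = (∑ l', c l' * ψ l' x) - (∑ l', c' l' * ψ l' x) := hsub c c' x
      rw [hd]
      have h1 := aux_exp_strong (∑ l', c l' * ψ l' x) (∑ l', c' l' * ψ l' x)
      have h2 : Real.exp (-(M+1))
          ≤ Real.exp (min (∑ l', c l' * ψ l' x) (∑ l', c' l' * ψ l' x)) := by
        apply Real.exp_le_exp.2
        exact le_min (hbound c hc x).1 (hbound c' hc' x).1
      have h3 := mul_le_mul_of_nonneg_right h2
        (sq_nonneg ((∑ l', c l' * ψ l' x) - (∑ l', c' l' * ψ l' x)))
      nlinarith [h1, h3]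
    have hintd : Integrable
        (fun x => Real.exp (-(M+1)) * (∑ l, (c l - c' l) * ψ l x) ^ 2) μ := by
      refine (aux_integrable μ ((hSmeas fun l => c l - c' l).pow_const 2)
        (C := (∑ l, |c l - c' l| * C l) ^ 2) fun x => ?_).const_mul _
      rw [abs_of_nonneg (sq_nonneg _)]
      have hb := hScrude (fun l => c l - c' l) x
      have hb2 := abs_le.1 hb
      exact sq_le_sq' (by linarith [hb2.1]) hb2.2
    have hm1 : Integrable
        (fun x => (∑ l, (c l - c' l) * ψ l x) * Real.exp (∑ l', c l' * ψ l' x)) μ :=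
      hintmul (fun l => c l - c' l) c
    have hm2 : Integrable
        (fun x => (∑ l, (c l - c' l) * ψ l x) * Real.exp (∑ l', c' l' * ψ l' x)) μ :=
      hintmul (fun l => c l - c' l) c'
    have hg1 : ∫ x, (∑ l, (c l - c' l) * ψ l x) * Real.exp (∑ l', c l' * ψ l' x) ∂μ
        = ∑ l, (c l - c' l) * Gf c l := hGlin c (fun l => c l - c' l)
    have hg2 : ∫ x, (∑ l, (c l - c' l) * ψ l x) * Real.exp (∑ l', c' l' * ψ l' x) ∂μ
        = ∑ l, (c l - c' l) * Gf c' l := hGlin c' (fun l => c l - c' l)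
    have hmono := integral_mono hintd (hm1.sub hm2) hpt
    simp only [Pi.sub_apply] at hmono
    rw [integral_const_mul, hL2 (fun l => c l - c' l),
      integral_sub hm1 hm2, hg1, hg2] at hmono
    have hfin : (∑ l, (c l - c' l) * Gf c l) - ∑ l, (c l - c' l) * Gf c' l
        = ∑ l, (c l - c' l) * (Gf c l - Gf c' l) := by
      rw [← Finset.sum_sub_distrib]
      exact Finset.sum_congr rfl fun l _ => by ring
    linarith [hmono, hfin.symm.le, hfin.le]
  -- Euclidean space setup
  set eθ₀ : EuclideanSpace ℝ Λ := (WithLp.equiv 2 (Λ → ℝ)).symm θ₀ with heθ₀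
  have hdist : ∀ θ η : EuclideanSpace ℝ Λ,
      dist θ η = Real.sqrt (∑ l, (θ l - η l) ^ 2) := by
    intro θ η
    rw [EuclideanSpace.dist_eq]
    congr 1
    exact Finset.sum_congr rfl fun l _ => by rw [Real.dist_eq, sq_abs]
  set K : Set (EuclideanSpace ℝ Λ) := Metric.closedBall eθ₀ (1/A) with hKdef
  have hKmem : ∀ ζ : EuclideanSpace ℝ Λ, ζ ∈ K ↔
      Real.sqrt (∑ l, (ζ l - θ₀ l) ^ 2) ≤ 1 / A := by
    intro ζ
    rw [hKdef, Metric.mem_closedBall, hdist]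
    rw [heθ₀]
    simp only [WithLp.equiv_symm_apply, PiLp.toLp_apply]
  set φV : EuclideanSpace ℝ Λ → ℝ :=
    fun θ => (∫ x, Real.exp (∑ l, θ l * ψ l x) ∂μ) - ∑ l, α l * θ l with hφV
  -- membership gives sup bounds
  have hKb : ∀ ζ : EuclideanSpace ℝ Λ, ζ ∈ K → ∀ x,
      -(M+1) ≤ (∑ l, ζ l * ψ l x) ∧ (∑ l, ζ l * ψ l x) ≤ M + 1 := by
    intro ζ hζ x
    have h1 : A * Real.sqrt (∑ l, (ζ l - θ₀ l) ^ 2) ≤ 1 := by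
      have h2 := (hKmem ζ).1 hζ
      rw [le_div_iff₀ hApos] at h2
      linarith [mul_comm A (Real.sqrt (∑ l, (ζ l - θ₀ l) ^ 2))]
    exact hbound (fun l => ζ l) h1 x
  -- continuity on K
  have hcont : ContinuousOn φV K := by
    have hL0 : (0:ℝ) ≤ (μ Set.univ).toReal * (Real.exp (M+1) * A)
        + Real.sqrt (∑ l, α l ^ 2) := by
      have h0 := ENNReal.toReal_nonneg (a := μ Set.univ)
      positivity
    refine LipschitzOnWith.continuousOn (K := Real.toNNReal ((μ Set.univ).toReal
      * (Real.exp (M+1) * A) + Real.sqrt (∑ l, α l ^ 2)))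
      (LipschitzOnWith.of_dist_le_mul ?_)
    intro θ hθ η hη
    rw [Real.coe_toNNReal _ hL0, Real.dist_eq]
    have e1 : φV θ - φV η =
        ((∫ x, Real.exp (∑ l, θ l * ψ l x) ∂μ)
          - ∫ x, Real.exp (∑ l, η l * ψ l x) ∂μ)
          - ∑ l, α l * (θ l - η l) := by
      rw [hφV]
      have h2 : ∑ l, α l * (θ l - η l) = (∑ l, α l * θ l) - ∑ l, α l * η l := by
        rw [← Finset.sum_sub_distrib]
        exact Finset.sum_congr rfl fun l _ => by ring
      rw [h2]
      ring
    have hZ : |(∫ x, Real.exp (∑ l, θ l * ψ l x) ∂μ)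
        - ∫ x, Real.exp (∑ l, η l * ψ l x) ∂μ|
        ≤ Real.exp (M+1) * (A * dist θ η) * (μ Set.univ).toReal := by
      rw [← integral_sub (hexpint (fun l => θ l)) (hexpint (fun l => η l))]
      have hb : ∀ x, ‖Real.exp (∑ l, θ l * ψ l x) - Real.exp (∑ l, η l * ψ l x)‖
          ≤ Real.exp (M+1) * (A * dist θ η) := by
        intro x
        rw [Real.norm_eq_abs]
        have h3 := aux_exp_lip (hKb θ hθ x).2 (hKb η hη x).2
        have h4 : |(∑ l, θ l * ψ l x) - ∑ l, η l * ψ l x| ≤ A * dist θ η := by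
          rw [← hsub (fun l => θ l) (fun l => η l) x, hdist θ η]
          exact hSle (fun l => θ l - η l) x
        calc |Real.exp (∑ l, θ l * ψ l x) - Real.exp (∑ l, η l * ψ l x)|
            ≤ Real.exp (M+1) * |(∑ l, θ l * ψ l x) - ∑ l, η l * ψ l x| := h3
          _ ≤ Real.exp (M+1) * (A * dist θ η) :=
              mul_le_mul_of_nonneg_left h4 (Real.exp_pos _).le
      simpa [Real.norm_eq_abs, measureReal_def] using
        norm_integral_le_of_norm_le_const (μ := μ) (ae_of_all _ hb)
    have hlin : |∑ l, α l * (θ l - η l)| ≤ Real.sqrt (∑ l, α l ^ 2) * dist θ η := by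
      have h1 : |∑ l, α l * (θ l - η l)| ≤ ∑ l, |α l| * |θ l - η l| := by
        refine (Finset.abs_sum_le_sum_abs _ _).trans (le_of_eq ?_)
        exact Finset.sum_congr rfl fun l _ => abs_mul _ _
      have h2 := Real.sum_mul_le_sqrt_mul_sqrt Finset.univ
        (fun l => |α l|) (fun l => |θ l - η l|)
      simp only [sq_abs] at h2
      rw [hdist θ η]
      exact h1.trans h2
    rw [e1]
    calc |(∫ x, Real.exp (∑ l, θ l * ψ l x) ∂μ)
          - (∫ x, Real.exp (∑ l, η l * ψ l x) ∂μ) - ∑ l, α l * (θ l - η l)|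
        ≤ |(∫ x, Real.exp (∑ l, θ l * ψ l x) ∂μ)
          - ∫ x, Real.exp (∑ l, η l * ψ l x) ∂μ| + |∑ l, α l * (θ l - η l)| :=
          abs_sub _ _
      _ ≤ Real.exp (M+1) * (A * dist θ η) * (μ Set.univ).toReal
          + Real.sqrt (∑ l, α l ^ 2) * dist θ η := add_le_add hZ hlin
      _ = ((μ Set.univ).toReal * (Real.exp (M+1) * A)
          + Real.sqrt (∑ l, α l ^ 2)) * dist θ η := by ring
  -- minimizer of φV on K
  have hKcp : IsCompact K := by rw [hKdef]; exact isCompact_closedBall _ _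
  have hKne : K.Nonempty := by
    refine ⟨eθ₀, ?_⟩
    rw [hKdef]
    exact Metric.mem_closedBall_self (by positivity)
  obtain ⟨θs, hθsK, hminOn⟩ := hKcp.exists_isMinOn hKne hcont
  have hmin : ∀ ζ ∈ K, φV θs ≤ φV ζ := fun ζ hζ => hminOn hζ
  -- derivative of φV along lines
  have hderiv : ∀ (θc : EuclideanSpace ℝ Λ) (d : Λ → ℝ),
      HasDerivAt (fun t : ℝ => φV (θc + t • (WithLp.equiv 2 (Λ → ℝ)).symm d))
        ((∑ l, d l * Gf (fun l' => θc l') l) - ∑ l, α l * d l) 0 := by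
    intro θc d
    have happly : ∀ (t : ℝ) l,
        (θc + t • (WithLp.equiv 2 (Λ → ℝ)).symm d) l = θc l + t * d l := by
      intro t l
      simp [PiLp.add_apply, PiLp.smul_apply, WithLp.equiv_symm_apply, PiLp.toLp_apply, smul_eq_mul]
    have heq : (fun t : ℝ => φV (θc + t • (WithLp.equiv 2 (Λ → ℝ)).symm d))
        = fun t => (∫ x, Real.exp ((∑ l, θc l * ψ l x) + t * (∑ l, d l * ψ l x)) ∂μ)
          - ((∑ l, α l * θc l) + t * (∑ l, α l * d l)) := by
      funext t
      simp only [hφV, happly t]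
      congr 1
      · congr 1
        funext x
        congr 1
        rw [Finset.sum_congr rfl fun l (_ : l ∈ Finset.univ) =>
            add_mul (θc l) (t * d l) (ψ l x),
          Finset.sum_add_distrib, Finset.mul_sum]
        congr 1
        exact Finset.sum_congr rfl fun l _ => by ring
      · rw [Finset.mul_sum, ← Finset.sum_add_distrib]
        exact Finset.sum_congr rfl fun l _ => by ring
    rw [heq]
    have h1 := aux_hasDerivAt_integral μ (hSmeas (fun l => θc l)) (hSmeas d)
      (Ca := A * Real.sqrt (∑ l, θc l ^ 2)) (Cb := A * Real.sqrt (∑ l, d l ^ 2))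
      (by positivity) (by positivity) (fun x => hSle _ x) (fun x => hSle d x)
    have h2 : HasDerivAt (fun t : ℝ => (∑ l, α l * θc l) + t * (∑ l, α l * d l))
        (∑ l, α l * d l) 0 := (hasDerivAt_mul_const _).const_add _
    have h4 : ∫ x, (∑ l, d l * ψ l x) * Real.exp (∑ l', θc l' * ψ l' x) ∂μ
        = ∑ l, d l * Gf (fun l' => θc l') l := hGlin _ d
    rw [← h4]
    exact h1.sub h2
  -- variational inequality at the minimizer
  have hvar : ∀ ζ ∈ K, (0:ℝ) ≤ ∑ l, (Gf (fun l' => θs l') l - α l) * (ζ l - θs l) := by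
    intro ζ hζ
    have hconv : Convex ℝ K := by rw [hKdef]; exact convex_closedBall _ _
    have heNd : (WithLp.equiv 2 (Λ → ℝ)).symm (fun l => ζ l - θs l) = ζ - θs := by
      ext l
      simp [WithLp.equiv_symm_apply, PiLp.toLp_apply, PiLp.sub_apply]
    have hstep : ∀ t : ℝ, t ∈ Set.Icc (0:ℝ) 1 →
        θs + t • (WithLp.equiv 2 (Λ → ℝ)).symm (fun l => ζ l - θs l) ∈ K := by
      intro t ht
      rw [heNd]
      exact hconv.add_smul_sub_mem hθsK hζ ht
    have hder := hderiv θs (fun l => ζ l - θs l)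
    have hm : ∀ t ∈ Set.Ioc (0:ℝ) 1,
        (fun t : ℝ => φV (θs + t • (WithLp.equiv 2 (Λ → ℝ)).symm
          (fun l => ζ l - θs l))) 0
        ≤ (fun t : ℝ => φV (θs + t • (WithLp.equiv 2 (Λ → ℝ)).symm
          (fun l => ζ l - θs l))) t := by
      intro t ht
      have h0 : θs + (0:ℝ) • (WithLp.equiv 2 (Λ → ℝ)).symm (fun l => ζ l - θs l)
          = θs := by simp
      simp only [h0]
      exact hmin _ (hstep t ⟨ht.1.le, ht.2⟩)
    have hvar0 := aux_deriv_nonneg hder hm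
    have hre : (∑ l, (ζ l - θs l) * Gf (fun l' => θs l') l)
        - ∑ l, α l * (ζ l - θs l)
        = ∑ l, (Gf (fun l' => θs l') l - α l) * (ζ l - θs l) := by
      rw [← Finset.sum_sub_distrib]
      exact Finset.sum_congr rfl fun l _ => by ring
    linarith [hre.symm.le, hre.le]
  -- rewrite hclose in terms of Gf
  have hGθ₀ : ∀ l, Gf θ₀ l = ∫ x, Real.exp (∑ l', θ₀ l' * ψ l' x) * ψ l x ∂μ :=
    fun l => by rw [hGdef]
  -- distance bound for the minimizer
  have hRnn : (0:ℝ) ≤ Real.sqrt (∑ l, (θs l - θ₀ l) ^ 2) := Real.sqrt_nonneg _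
  have hδnn : (0:ℝ) ≤ Real.sqrt (∑ l, (α l - Gf θ₀ l) ^ 2) := Real.sqrt_nonneg _
  have hθsb : A * Real.sqrt (∑ l, (θs l - θ₀ l) ^ 2) ≤ 1 := by
    have h2 := (hKmem θs).1 hθsK
    rw [le_div_iff₀ hApos] at h2
    linarith [mul_comm A (Real.sqrt (∑ l, (θs l - θ₀ l) ^ 2))]
  have hstrongs := hstrong (fun l => θs l) θ₀ hθsb (by simp)
  have hv := hvar eθ₀ (by rw [hKdef]; exact Metric.mem_closedBall_self (by positivity))
  simp only [heθ₀, WithLp.equiv_symm_apply, PiLp.toLp_apply] at hv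
  -- Cauchy-Schwarz
  have hCS : ∑ l, (θs l - θ₀ l) * (α l - Gf θ₀ l)
      ≤ Real.sqrt (∑ l, (θs l - θ₀ l) ^ 2) * Real.sqrt (∑ l, (α l - Gf θ₀ l) ^ 2) := by
    have h1 : ∑ l, (θs l - θ₀ l) * (α l - Gf θ₀ l)
        ≤ ∑ l, |θs l - θ₀ l| * |α l - Gf θ₀ l| := by
      refine Finset.sum_le_sum fun l _ => ?_
      rw [← abs_mul]
      exact le_abs_self _
    have h2 := Real.sum_mul_le_sqrt_mul_sqrt Finset.univ
      (fun l => |θs l - θ₀ l|) (fun l => |α l - Gf θ₀ l|)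
    simp only [sq_abs] at h2
    exact h1.trans h2
  -- combine
  have hsplit : ∑ l, (θs l - θ₀ l) * (Gf (fun l' => θs l') l - Gf θ₀ l)
      = (- ∑ l, (Gf (fun l' => θs l') l - α l) * (θ₀ l - θs l))
        + ∑ l, (θs l - θ₀ l) * (α l - Gf θ₀ l) := by
    rw [← Finset.sum_neg_distrib, ← Finset.sum_add_distrib]
    exact Finset.sum_congr rfl fun l _ => by ring
  have hkey : Real.exp (-(M+1)) * ∑ l, (θs l - θ₀ l) ^ 2
      ≤ Real.sqrt (∑ l, (θs l - θ₀ l) ^ 2) * Real.sqrt (∑ l, (α l - Gf θ₀ l) ^ 2) := by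
    calc Real.exp (-(M+1)) * ∑ l, (θs l - θ₀ l) ^ 2
        ≤ ∑ l, (θs l - θ₀ l) * (Gf (fun l' => θs l') l - Gf θ₀ l) := hstrongs
      _ = (- ∑ l, (Gf (fun l' => θs l') l - α l) * (θ₀ l - θs l))
          + ∑ l, (θs l - θ₀ l) * (α l - Gf θ₀ l) := hsplit
      _ ≤ ∑ l, (θs l - θ₀ l) * (α l - Gf θ₀ l) := by linarith [hv]
      _ ≤ _ := hCS
  have hsq : Real.sqrt (∑ l, (θs l - θ₀ l) ^ 2) ^ 2 = ∑ l, (θs l - θ₀ l) ^ 2 :=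
    Real.sq_sqrt (Finset.sum_nonneg fun l _ => sq_nonneg _)
  have hRle : Real.sqrt (∑ l, (θs l - θ₀ l) ^ 2)
      ≤ Real.exp (M+1) * Real.sqrt (∑ l, (α l - Gf θ₀ l) ^ 2) := by
    rcases eq_or_lt_of_le hRnn with h | h
    · rw [← h]
      positivity
    · have hE1 : (0:ℝ) < Real.exp (M+1) := Real.exp_pos _
      have hnn' : (0:ℝ) ≤ ∑ l, (θs l - θ₀ l) ^ 2 :=
        Finset.sum_nonneg fun l _ => sq_nonneg _
      rw [Real.exp_neg] at hkey
      have c1 : (Real.exp (M+1))⁻¹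
          * (Real.sqrt (∑ l, (θs l - θ₀ l) ^ 2) * Real.sqrt (∑ l, (θs l - θ₀ l) ^ 2))
          ≤ Real.sqrt (∑ l, (θs l - θ₀ l) ^ 2) * Real.sqrt (∑ l, (α l - Gf θ₀ l) ^ 2) := by
        rw [Real.mul_self_sqrt hnn']
        exact hkey
      have c3 := mul_le_mul_of_nonneg_left c1 hE1.le
      rw [← mul_assoc, mul_inv_cancel₀ hE1.ne', one_mul] at c3
      have c2 : Real.sqrt (∑ l, (θs l - θ₀ l) ^ 2) * Real.sqrt (∑ l, (θs l - θ₀ l) ^ 2)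
          ≤ Real.sqrt (∑ l, (θs l - θ₀ l) ^ 2)
            * (Real.exp (M+1) * Real.sqrt (∑ l, (α l - Gf θ₀ l) ^ 2)) :=
        c3.trans_eq (by ring)
      exact le_of_mul_le_mul_left c2 h
  -- hclose in convenient form
  have hδle : Real.sqrt (∑ l, (α l - Gf θ₀ l) ^ 2) ≤ 1 / (2 * Real.exp (M+1) * A) := by
    have h1 : (2:ℝ) * Real.exp 1 * Real.exp M * A = 2 * Real.exp (M+1) * A := by
      rw [Real.exp_add]
      ring
    have h2 := hclose
    simp only [← hGθ₀] at h2
    rwa [h1] at h2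
  have hRhalf : Real.sqrt (∑ l, (θs l - θ₀ l) ^ 2) ≤ 1 / (2 * A) := by
    have h1 := hRle.trans (mul_le_mul_of_nonneg_left hδle (Real.exp_pos (M+1)).le)
    have h2 : Real.exp (M+1) * (1 / (2 * Real.exp (M+1) * A)) = 1 / (2 * A) := by
      field_simp
    rwa [h2] at h1
  -- θs is interior
  have hball : θs ∈ Metric.ball eθ₀ (1/A) := by
    rw [Metric.mem_ball, hdist]
    have h1 : Real.sqrt (∑ l, (θs l - eθ₀ l) ^ 2)
        = Real.sqrt (∑ l, (θs l - θ₀ l) ^ 2) := by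
      rw [heθ₀]
      simp only [WithLp.equiv_symm_apply, PiLp.toLp_apply]
    rw [h1]
    have h2 : 1 / (2 * A) < 1 / A := by
      rw [div_lt_div_iff₀ (by positivity) hApos]
      linarith
    linarith [hRhalf]
  have hnhds : K ∈ nhds θs := by
    refine Filter.mem_of_superset (Metric.isOpen_ball.mem_nhds hball) ?_
    rw [hKdef]
    exact Metric.ball_subset_closedBall
  have hloc : IsLocalMin φV θs := hminOn.isLocalMin hnhds
  -- stationarity: the moment equations hold
  have hGeq : ∀ l, Gf (fun l' => θs l') l = α l := by
    intro l
    have hdl := hderiv θs ((Pi.single l 1 : Λ → ℝ))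
    have hg0 : θs + (0:ℝ) • (WithLp.equiv 2 (Λ → ℝ)).symm ((Pi.single l 1 : Λ → ℝ)) = θs := by
      simp
    have hlocl : IsLocalMin (fun t : ℝ =>
        φV (θs + t • (WithLp.equiv 2 (Λ → ℝ)).symm ((Pi.single l 1 : Λ → ℝ)))) 0 := by
      have hcont2 : ContinuousAt (fun t : ℝ =>
          θs + t • (WithLp.equiv 2 (Λ → ℝ)).symm ((Pi.single l 1 : Λ → ℝ))) 0 :=
        (continuous_const.add (continuous_id.smul continuous_const)).continuousAt
      have htend : Filter.Tendsto (fun t : ℝ =>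
          θs + t • (WithLp.equiv 2 (Λ → ℝ)).symm ((Pi.single l 1 : Λ → ℝ))) (nhds 0) (nhds θs) := by
        have := hcont2.tendsto
        rwa [hg0] at this
      have hev := htend.eventually hloc
      refine hev.mono fun t ht => ?_
      simpa only [hg0] using ht
    have hz := hlocl.hasDerivAt_eq_zero hdl
    have he1 : ∑ l', (Pi.single l 1 : Λ → ℝ) l' * Gf (fun l'' => θs l'') l'
        = Gf (fun l'' => θs l'') l := by
      rw [Finset.sum_eq_single l]
      · simp
      · intro k _ hk
        simp [Pi.single_apply, hk]
      · intro h
        exact absurd (Finset.mem_univ l) h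
    have he2 : ∑ l', α l' * (Pi.single l 1 : Λ → ℝ) l' = α l := by
      rw [Finset.sum_eq_single l]
      · simp
      · intro k _ hk
        simp [Pi.single_apply, hk]
      · intro h
        exact absurd (Finset.mem_univ l) h
    rw [he1, he2] at hz
    linarith [sub_eq_zero.1 hz]
  -- conclusion
  refine ⟨fun l => θs l, ?_, ?_⟩
  · intro l
    have h1 := hGeq l
    rw [hGdef] at h1
    exact h1
  · simp only [← hGθ₀]
    calc Real.sqrt (∑ l, (θs l - θ₀ l) ^ 2)
        ≤ Real.exp (M+1) * Real.sqrt (∑ l, (α l - Gf θ₀ l) ^ 2) := hRle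
      _ ≤ 2 * Real.exp 1 * Real.exp M * Real.sqrt (∑ l, (α l - Gf θ₀ l) ^ 2) := by
          have h1 : Real.exp (M+1) ≤ 2 * Real.exp 1 * Real.exp M := by
            rw [Real.exp_add]
            nlinarith [Real.exp_pos M, Real.exp_pos 1]
          exact mul_le_mul_of_nonneg_right h1 hδnn
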